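/- Let F be a measurable subset of an arc I of 𝕋 and let ε > 0. Then there exists a closed subset B of I that is almost contained in F (i.e. |B \ F| = 0) such that every arc ℓ complementary to B in I (i.e. every connected component of I \ B) satisfies |ℓ ∩ F| ≤ ε·|ℓ|. -/

import Mathlib

open MeasureTheory Set Filter Topology
open scoped ENNReal

noncomputable section

/-- The unit circle `𝕋` as a subset of `ℂ`. -/
def unitCircleSet : Set ℂ := Metric.sphere 0 1

/-- The normalized arclength (Lebesgue) measure `m` on the unit circle `𝕋`,
viewed as a Borel measure on `ℂ`, normalized so that `m(𝕋) = 1`. -/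
def mC : Measure ℂ :=
  (ENNReal.ofReal (2 * Real.pi))⁻¹ •
    Measure.map (circleMap 0 1) (volume.restrict (Set.Ioc 0 (2 * Real.pi)))

/-- An open arc of the unit circle. -/
def IsOpenArc (A : Set ℂ) : Prop :=
  ∃ a b : ℝ, a < b ∧ b - a ≤ 2 * Real.pi ∧ A = circleMap 0 1 '' Set.Ioo a b

/-- A closed arc of the unit circle. -/
def IsClosedArc (A : Set ℂ) : Prop :=
  ∃ a b : ℝ, a < b ∧ b - a ≤ 2 * Real.pi ∧ A = circleMap 0 1 '' Set.Icc a b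

/-- The dyadic arcs `d_{n,j} = { e^{it} : t ∈ [2π 2⁻ⁿ j, 2π 2⁻ⁿ (j+1)] }`. -/
def IsDyadicArc (A : Set ℂ) : Prop :=
  ∃ n j : ℕ, j < 2 ^ n ∧
    A = circleMap 0 1 ''
      Set.Icc (2 * Real.pi * j / 2 ^ n) (2 * Real.pi * (j + 1) / 2 ^ n)

/-- A measure function: an increasing continuous function `h` with `h 0 = 0`, such that
`t ↦ h t / t` is decreasing and tends to `+∞` as `t → 0⁺`. -/
structure IsMeasureFunction (h : ℝ → ℝ) : Prop where
  continuousOn : ContinuousOn h (Set.Ici 0)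
  monotoneOn : MonotoneOn h (Set.Ici 0)
  map_zero : h 0 = 0
  antitoneOn : AntitoneOn (fun t => h t / t) (Set.Ioi 0)
  tendsto_atTop : Filter.Tendsto (fun t => h t / t) (nhdsWithin 0 (Set.Ioi 0)) Filter.atTop

/-- The Hausdorff content `M_h(E)`: the infimum of `Σ_{ℓ ∈ L} h(|ℓ|)` over countable
covers `L` of `E` by open arcs of the circle. -/
def hausdorffContent (h : ℝ → ℝ) (E : Set ℂ) : ℝ≥0∞ :=
  ⨅ (L : Set (Set ℂ)) (_ : L.Countable) (_ : ∀ ℓ ∈ L, IsOpenArc ℓ)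
    (_ : E ⊆ ⋃₀ L), ∑' ℓ : L, ENNReal.ofReal (h (mC ↑ℓ).toReal)

/-- The dyadic Hausdorff content `M_{h,d}(E)`: as `M_h(E)` but with covers by dyadic arcs. -/
def dyadicContent (h : ℝ → ℝ) (E : Set ℂ) : ℝ≥0∞ :=
  ⨅ (L : Set (Set ℂ)) (_ : L.Countable) (_ : ∀ d ∈ L, IsDyadicArc d)
    (_ : E ⊆ ⋃₀ L), ∑' d : L, ENNReal.ofReal (h (mC ↑d).toReal)

/-- The small Hausdorff content `M⁰_h(E)`: as `M_h(E)`, but the cover is only required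
to cover `E` up to a set of Lebesgue measure zero. -/
def hausdorffContent0 (h : ℝ → ℝ) (E : Set ℂ) : ℝ≥0∞ :=
  ⨅ (L : Set (Set ℂ)) (_ : L.Countable) (_ : ∀ ℓ ∈ L, IsOpenArc ℓ)
    (_ : mC (E \ ⋃₀ L) = 0), ∑' ℓ : L, ENNReal.ofReal (h (mC ↑ℓ).toReal)

/-- The small dyadic Hausdorff content `M⁰_{h,d}(E)`. -/
def dyadicContent0 (h : ℝ → ℝ) (E : Set ℂ) : ℝ≥0∞ :=
  ⨅ (L : Set (Set ℂ)) (_ : L.Countable) (_ : ∀ d ∈ L, IsDyadicArc d)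
    (_ : mC (E \ ⋃₀ L) = 0), ∑' d : L, ENNReal.ofReal (h (mC ↑d).toReal)

/-- An `h`-Carleson set: a closed subset `A` of the circle whose complement `𝕋 \ A`
is a countable union `⋃ L` of open arcs with `Σ_{ℓ ∈ L} h(|ℓ|) < ∞`.  (For nonempty `A`
this is equivalent to the usual definition via the decomposition of `𝕋 \ A` into its
connected components, i.e. into countably many pairwise disjoint open arcs, by
subadditivity of `h`.) -/
def IsHCarleson (h : ℝ → ℝ) (A : Set ℂ) : Prop :=
  A ⊆ unitCircleSet ∧ IsClosed A ∧
    ∃ L : Set (Set ℂ), L.Countable ∧ (∀ ℓ ∈ L, IsOpenArc ℓ) ∧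
      unitCircleSet \ A = ⋃₀ L ∧
      ∑' ℓ : L, ENNReal.ofReal (h (mC ↑ℓ).toReal) ≠ ⊤

/-- `(core, res)` is a core-residual decomposition of `E` with respect to `h`:
`core` and `res` are disjoint measurable sets with `E = (res ∪ core) \ N` for some
Lebesgue-null set `N`; every `h`-Carleson set almost contained in `E` is almost
contained in `core`; and `core` is, up to a null set, a countable union of
`h`-Carleson sets almost contained in `E`. -/
def IsCoreResidualDecomp (h : ℝ → ℝ) (E core res : Set ℂ) : Prop :=
  MeasurableSet core ∧ MeasurableSet res ∧ Disjoint core res ∧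
    (∃ N : Set ℂ, mC N = 0 ∧ E = (res ∪ core) \ N) ∧
    (∀ A : Set ℂ, IsHCarleson h A → mC (A \ E) = 0 → mC (A \ core) = 0) ∧
    (∃ G : ℕ → Set ℂ, (∀ n, IsHCarleson h (G n) ∧ mC (G n \ E) = 0) ∧
      mC ((core \ ⋃ n, G n) ∪ ((⋃ n, G n) \ core)) = 0)

/-- The measure function `h(t) = t log(e/t)` defining Beurling-Carleson sets. -/
def hBC : ℝ → ℝ := fun t => t * Real.log (Real.exp 1 / t)

/-- A Beurling-Carleson set. -/
def IsBeurlingCarleson (A : Set ℂ) : Prop := IsHCarleson hBC A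

open Function
open scoped Real



private lemma cm_eq_iff {s t : ℝ} :
    circleMap 0 1 s = circleMap 0 1 t ↔ ∃ n : ℤ, s = t + n * (2 * π) := by
  simp only [circleMap, zero_add, one_mul, Complex.ofReal_one]
  rw [Complex.exp_eq_exp_iff_exists_int]
  constructor
  · rintro ⟨n, hn⟩
    refine ⟨n, ?_⟩
    have h2 : ((s - (t + (n:ℝ) * (2 * π)) : ℝ) : ℂ) * Complex.I = 0 := by
      push_cast at hn ⊢; linear_combination hn
    rcases mul_eq_zero.mp h2 with h | h
    · have := Complex.ofReal_eq_zero.mp h; linarith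
    · exact absurd h Complex.I_ne_zero
  · rintro ⟨n, hn⟩
    exact ⟨n, by rw [hn]; push_cast; ring⟩

/-- if two circle parameters give same point and are within an open window of width `2π`,
they are equal -/
private lemma cm_inj {s t : ℝ} (h : circleMap 0 1 s = circleMap 0 1 t)
    (hd : |s - t| < 2 * π) : s = t := by
  obtain ⟨n, hn⟩ := cm_eq_iff.mp h
  have hπ := Real.pi_pos
  have : |(n : ℝ)| * (2 * π) < 1 * (2 * π) := by
    rw [hn] at hd; simp only [add_sub_cancel_left] at hd
    calc |(n:ℝ)| * (2*π) = |(n:ℝ) * (2*π)| := by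
          rw [abs_mul, abs_of_pos (show (0:ℝ) < 2*π by positivity)]
    _ < 2*π := hd
    _ = 1 * (2*π) := by ring
  have : |(n : ℝ)| < 1 := lt_of_mul_lt_mul_right this (by positivity)
  have hn0 : n = 0 := by
    have : (n : ℝ) = 0 := by
      by_contra h0
      have h1 : 1 ≤ |n| := Int.one_le_abs (by exact_mod_cast h0)
      have : (1:ℝ) ≤ |(n:ℝ)| := by exact_mod_cast (by push_cast [← Int.cast_abs] at *; exact_mod_cast h1 : (1:ℝ) ≤ ((|n| : ℤ) : ℝ))
      linarith
    exact_mod_cast this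
  rw [hn, hn0]; push_cast; ring

private lemma window_invariance {P : Set ℝ} (hP : MeasurableSet P)
    (hper : Function.Periodic (fun t => t ∈ P) (2 * π)) (s t : ℝ) :
    volume (P ∩ Ioc s (s + 2 * π)) = volume (P ∩ Ioc t (t + 2 * π)) := by
  haveI : Fact (0 < 2 * π) := ⟨Real.two_pi_pos⟩
  set T := 2 * π with hT
  let mk : ℝ → AddCircle T := ((↑) : ℝ → AddCircle T)
  have hpre : mk ⁻¹' (mk '' P) = P := by
    ext x
    constructor
    · rintro ⟨p, hp, hxp⟩
      have h := (QuotientAddGroup.eq).mp hxp.symm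
      obtain ⟨k, hk⟩ := AddSubgroup.mem_zmultiples_iff.mp h
      have hx : x = p + (-k : ℤ) • T := by
        have : (k : ℤ) • T = -x + p := hk
        simp only [zsmul_eq_mul] at this ⊢
        push_cast
        linarith
      have hmem : (p + ((-k : ℤ) : ℝ) * T ∈ P) = (p ∈ P) := by
        simpa [mul_comm] using (hper.int_mul (-k)) p
      rw [hx, zsmul_eq_mul]
      exact hmem ▸ hp
    · intro hx
      exact ⟨x, hx, rfl⟩
  have hmeas : MeasurableSet (mk '' P) := by
    show MeasurableSet (mk ⁻¹' (mk '' P))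
    rw [hpre]; exact hP
  have key : ∀ u : ℝ, volume (P ∩ Ioc u (u + T)) = volume (mk '' P) := by
    intro u
    have h2 := (AddCircle.measurePreserving_mk T u).measure_preimage hmeas.nullMeasurableSet
    rw [show (QuotientAddGroup.mk ⁻¹' (mk '' P)) = mk ⁻¹' (mk '' P) from rfl, hpre] at h2
    rw [← h2, Measure.restrict_apply hP]
  rw [key s, key t]

private lemma mC_apply {T : Set ℂ} (hT : MeasurableSet T) (u : ℝ) :
    mC T = (ENNReal.ofReal (2 * π))⁻¹ *
      volume (circleMap 0 1 ⁻¹' T ∩ Ioc u (u + 2 * π)) := by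
  have hmeas : Measurable (circleMap 0 1) := (continuous_circleMap 0 1).measurable
  have hP : MeasurableSet (circleMap 0 1 ⁻¹' T) := hmeas hT
  have hper : Function.Periodic (fun t => t ∈ circleMap 0 1 ⁻¹' T) (2 * π) := by
    intro x
    simp only [mem_preimage, (periodic_circleMap 0 1) x]
  rw [mC, Measure.smul_apply, smul_eq_mul, Measure.map_apply hmeas hT,
    Measure.restrict_apply hP]
  congr 1
  have := window_invariance hP hper 0 u
  rw [zero_add] at this
  exact this

private lemma cm_mem_sphere (t : ℝ) : circleMap 0 1 t ∈ unitCircleSet :=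
  circleMap_mem_sphere 0 zero_le_one t

private lemma cm_surj {z : ℂ} (hz : z ∈ unitCircleSet) : ∃ t : ℝ, circleMap 0 1 t = z := by
  have : z ∈ Metric.sphere (0:ℂ) |1| := by rwa [abs_one]
  rw [← range_circleMap 0 1] at this
  exact this

/-- Image of a short open interval is relatively open in the sphere. -/
private lemma image_Ioo_eq {α β : ℝ} (hαβ : α < β) (h2 : β - α < 2 * π) :
    circleMap 0 1 '' Ioo α β = unitCircleSet \ circleMap 0 1 '' Icc β (α + 2 * π) := by
  have hπ := Real.pi_pos
  ext z
  constructor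
  · rintro ⟨s, hs, rfl⟩
    refine ⟨cm_mem_sphere s, ?_⟩
    rintro ⟨u, hu, huz⟩
    have := cm_inj huz (by
      rw [abs_sub_lt_iff]
      constructor <;> [skip; skip] <;>
        · rcases hs with ⟨hs1, hs2⟩; rcases hu with ⟨hu1, hu2⟩; linarith)
    rcases hs with ⟨hs1, hs2⟩; rcases hu with ⟨hu1, hu2⟩
    subst this
    linarith
  · rintro ⟨hz, hz2⟩
    obtain ⟨t, rfl⟩ := cm_surj hz
    set t' := toIcoMod Real.two_pi_pos α t with ht'
    have htt' : circleMap 0 1 t' = circleMap 0 1 t := by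
      rcases cm_eq_iff (s := t') (t := t) with ⟨_, _⟩
      apply cm_eq_iff.mpr
      obtain ⟨k, hk⟩ : ∃ k : ℤ, t - t' = k • (2 * π) := ⟨toIcoDiv Real.two_pi_pos α t,
        (self_sub_toIcoMod Real.two_pi_pos α t)⟩
      exact ⟨-k, by simp only [zsmul_eq_mul] at hk; push_cast; linarith⟩
    have hmem := toIcoMod_mem_Ico Real.two_pi_pos α t
    rcases hmem with ⟨h1, h2'⟩
    rcases eq_or_lt_of_le h1 with heq | hlt
    · exfalso
      apply hz2
      refine ⟨α + 2 * π, ⟨le_of_lt (by linarith), le_refl _⟩, ?_⟩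
      rw [← htt']
      have : t' = α := heq.symm
      rw [this]
      apply cm_eq_iff.mpr
      exact ⟨1, by push_cast; ring⟩
    · rcases lt_or_ge t' β with hb | hb
      · exact ⟨t', ⟨hlt, hb⟩, htt'⟩
      · exfalso
        apply hz2
        exact ⟨t', ⟨hb, le_of_lt h2'⟩, htt'⟩

/-- Images of open real sets are relatively open in the sphere. -/
private lemma exists_open_image {W : Set ℝ} (hW : IsOpen W) :
    ∃ O : Set ℂ, IsOpen O ∧ unitCircleSet ∩ O = circleMap 0 1 '' W := by
  have hπ := Real.pi_gt_three
  refine ⟨⋃₀ {O | IsOpen O ∧ unitCircleSet ∩ O ⊆ circleMap 0 1 '' W}, ?_, ?_⟩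
  · exact isOpen_sUnion fun O hO => hO.1
  · apply Subset.antisymm
    · rintro z ⟨hz, O, hO, hzO⟩
      exact hO.2 ⟨hz, hzO⟩
    · rintro z ⟨t, ht, rfl⟩
      obtain ⟨δ, hδ, hball⟩ := Metric.isOpen_iff.mp hW t ht
      set δ' := min δ 1 with hδ'
      have hδ'0 : 0 < δ' := lt_min hδ one_pos
      have hsub : Ioo (t - δ') (t + δ') ⊆ W := by
        intro y hy
        apply hball
        rw [Real.ball_eq_Ioo]
        exact ⟨by rcases hy with ⟨h1,_⟩; have := min_le_left δ 1; linarith,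
               by rcases hy with ⟨_,h2⟩; have := min_le_left δ 1; linarith⟩
      have hlen : (t + δ') - (t - δ') < 2 * π := by
        have := min_le_right δ 1; simp only [hδ']; linarith
      have heq := image_Ioo_eq (by linarith : t - δ' < t + δ') hlen
      set K := circleMap 0 1 '' Icc (t + δ') (t - δ' + 2 * π) with hK
      have hKclosed : IsClosed K :=
        (isCompact_Icc.image (continuous_circleMap 0 1)).isClosed
      refine ⟨cm_mem_sphere t, ?_⟩
      rw [mem_sUnion]
      refine ⟨Kᶜ, mem_setOf.mpr ⟨hKclosed.isOpen_compl, ?_⟩, ?_⟩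
      · rintro w ⟨hw1, hw2⟩
        have : w ∈ circleMap 0 1 '' Ioo (t - δ') (t + δ') := by
          rw [heq]; exact ⟨hw1, hw2⟩
        exact image_mono hsub this
      · show circleMap 0 1 t ∈ Kᶜ
        intro hmem
        have : circleMap 0 1 t ∈ unitCircleSet \ K := by
          rw [← heq]
          exact ⟨t, ⟨by linarith, by linarith⟩, rfl⟩
        exact this.2 hmem

private lemma real_decomp (a b : ℝ) (hab : a < b) (F' : Set ℝ) (hm : MeasurableSet F')
    {ε : ℝ} (hε : 0 < ε) :
    ∃ B' : Set ℝ, IsClosed B' ∧ B' ⊆ Icc a b ∧ b ∈ B' ∧ volume (B' \ F') = 0 ∧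
      ∀ c d : ℝ, a ≤ c → c < d → d ≤ b → Ioo c d ∩ B' = ∅ → d ∈ B' →
        volume (F' ∩ Ioo c d) ≤ ENNReal.ofReal (ε * (d - c)) := by
  classical
  set φ : ℝ → ℝ := fun t => (volume (F' ∩ Icc a t)).toReal with hφdef
  set ψ : ℝ → ℝ := fun t => ε * (t - a) - φ t with hψdef
  have hfin : ∀ t, volume (F' ∩ Icc a t) ≠ ⊤ := fun t =>
    ((measure_mono inter_subset_right).trans_lt
      (by rw [Real.volume_Icc]; exact ENNReal.ofReal_lt_top)).ne
  have hIocfin : ∀ c d : ℝ, volume (F' ∩ Ioc c d) ≠ ⊤ := fun c d =>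
    ((measure_mono inter_subset_right).trans_lt
      (by rw [Real.volume_Ioc]; exact ENNReal.ofReal_lt_top)).ne
  have hadd : ∀ {c d : ℝ}, a ≤ c → c ≤ d →
      volume (F' ∩ Icc a d) = volume (F' ∩ Icc a c) + volume (F' ∩ Ioc c d) := by
    intro c d hac hcd
    have hsetu : F' ∩ Icc a d = (F' ∩ Icc a c) ∪ (F' ∩ Ioc c d) := by
      rw [← inter_union_distrib_left]
      congr 1
      ext x; simp only [mem_union, mem_Icc, mem_Ioc]
      constructor
      · rintro ⟨h1, h2⟩
        rcases le_or_gt x c with h | h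
        exacts [Or.inl ⟨h1, h⟩, Or.inr ⟨h, h2⟩]
      · rintro (⟨h1, h2⟩ | ⟨h1, h2⟩)
        exacts [⟨h1, h2.trans hcd⟩, ⟨hac.trans h1.le, h2⟩]
    have hdisj : Disjoint (F' ∩ Icc a c) (F' ∩ Ioc c d) := by
      rw [Set.disjoint_left]
      rintro x ⟨_, _, hxc⟩ ⟨_, hcx, _⟩
      exact absurd hxc (not_le.mpr hcx)
    rw [hsetu, measure_union hdisj (hm.inter measurableSet_Ioc)]
  have hφdiff : ∀ {c d : ℝ}, a ≤ c → c ≤ d →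
      φ d - φ c = (volume (F' ∩ Ioc c d)).toReal := by
    intro c d hac hcd
    have h := hadd hac hcd
    simp only [hφdef]
    rw [h, ENNReal.toReal_add (hfin c) (hIocfin c d)]
    ring
  have hφlip : ∀ {c d : ℝ}, a ≤ c → c ≤ d → φ d - φ c ≤ d - c ∧ 0 ≤ φ d - φ c := by
    intro c d hac hcd
    rw [hφdiff hac hcd]
    constructor
    · have h1 : volume (F' ∩ Ioc c d) ≤ ENNReal.ofReal (d - c) := by
        rw [← Real.volume_Ioc]; exact measure_mono inter_subset_right
      have := ENNReal.toReal_mono ENNReal.ofReal_ne_top h1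
      rwa [ENNReal.toReal_ofReal (by linarith)] at this
    · exact ENNReal.toReal_nonneg
  have hψcont : ContinuousOn ψ (Icc a b) := by
    have hφcont : ContinuousOn φ (Icc a b) := by
      have hlip : LipschitzOnWith 1 φ (Icc a b) := by
        apply LipschitzOnWith.of_dist_le_mul
        intro x hx y hy
        rw [Real.dist_eq, Real.dist_eq, NNReal.coe_one, one_mul]
        rcases le_total x y with h | h
        · rw [abs_sub_comm (φ x) (φ y), abs_sub_comm x y,
            abs_of_nonneg (hφlip hx.1 h).2, abs_of_nonneg (by linarith : (0:ℝ) ≤ y - x)]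
          exact (hφlip hx.1 h).1
        · rw [abs_of_nonneg (hφlip hy.1 h).2, abs_of_nonneg (by linarith : (0:ℝ) ≤ x - y)]
          exact (hφlip hy.1 h).1
      exact hlip.continuousOn
    exact (((continuous_const.mul (continuous_id.sub continuous_const)).continuousOn)).sub hφcont
  set B' : Set ℝ := {t | t ∈ Icc a b ∧ ∀ s ∈ Icc t b, ψ s ≤ ψ t} with hB'def
  have hB'sub : B' ⊆ Icc a b := fun t ht => ht.1
  have hbB : b ∈ B' := ⟨⟨hab.le, le_refl b⟩, fun s hs => by
    have : s = b := le_antisymm hs.2 hs.1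
    rw [this]⟩
  have hBclosed : IsClosed B' := by
    apply IsSeqClosed.isClosed
    intro x p hx hxp
    have hpI : p ∈ Icc a b :=
      isClosed_Icc.mem_of_tendsto hxp (Eventually.of_forall fun n => (hx n).1)
    refine ⟨hpI, fun s hs => ?_⟩
    rcases eq_or_lt_of_le hs.1 with heq | hps
    · rw [← heq]
    · have hev : ∀ᶠ n in atTop, x n < s := hxp.eventually_lt_const hps
      have hev2 : ∀ᶠ n in atTop, ψ s ≤ ψ (x n) :=
        hev.mono fun n hn => (hx n).2 s ⟨hn.le, hs.2⟩
      have htend : Tendsto (fun n => ψ (x n)) atTop (𝓝 (ψ p)) := by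
        have h1 : Tendsto x atTop (𝓝[Icc a b] p) :=
          tendsto_nhdsWithin_of_tendsto_nhds_of_eventually_within x hxp
            (Eventually.of_forall fun n => (hx n).1)
        exact (hψcont p hpI).tendsto.comp h1
      exact ge_of_tendsto htend hev2
  have hnull : volume (B' \ F') = 0 := by
    have hae := Besicovitch.ae_tendsto_measure_inter_div_of_measurableSet volume hm
    rw [ae_iff] at hae
    have hsub2 : B' \ F' ⊆ {x : ℝ | ¬ Tendsto (fun r => volume (F' ∩ Metric.closedBall x r) /
        volume (Metric.closedBall x r)) (𝓝[>] 0) (𝓝 (F'.indicator 1 x))} ∪ {b} := by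
      rintro t ⟨htB, htF⟩
      by_cases htb : t = b
      · exact Or.inr (by simp [htb])
      left
      intro hten
      have htlt : t < b := lt_of_le_of_ne htB.1.2 htb
      rw [Set.indicator_of_notMem htF] at hten
      have hlow : ∀ r ∈ Ioo (0:ℝ) (b - t), ENNReal.ofReal (ε/2) ≤
          volume (F' ∩ Metric.closedBall t r) / volume (Metric.closedBall t r) := by
        rintro r ⟨hr0, hrb⟩
        have hψr : ψ (t + r) ≤ ψ t := htB.2 (t + r) ⟨by linarith, by linarith⟩
        have hat : a ≤ t := htB.1.1
        have hkey : ε * r ≤ (volume (F' ∩ Ioc t (t + r))).toReal := by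
          rw [← hφdiff hat (by linarith : t ≤ t + r)]
          simp only [hψdef] at hψr
          linarith
        have h1 : ENNReal.ofReal (ε * r) ≤ volume (F' ∩ Metric.closedBall t r) := by
          refine (ENNReal.ofReal_le_of_le_toReal hkey).trans (measure_mono ?_)
          apply inter_subset_inter_right
          rw [Real.closedBall_eq_Icc]
          exact Ioc_subset_Icc_self.trans (Icc_subset_Icc (by linarith) (le_refl _))
        calc ENNReal.ofReal (ε/2) = ENNReal.ofReal (ε * r) / ENNReal.ofReal (2 * r) := by
              rw [← ENNReal.ofReal_div_of_pos (by linarith)]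
              congr 1
              field_simp
          _ ≤ volume (F' ∩ Metric.closedBall t r) / volume (Metric.closedBall t r) := by
              rw [Real.volume_closedBall]
              exact ENNReal.div_le_div_right h1 _
      have hev := hten.eventually_lt_const
        (show (0:ℝ≥0∞) < ENNReal.ofReal (ε/2) from ENNReal.ofReal_pos.mpr (by linarith))
      have hmem : Ioo (0:ℝ) (b - t) ∈ 𝓝[>] (0:ℝ) :=
        Ioo_mem_nhdsGT_of_mem ⟨le_refl 0, by linarith⟩
      obtain ⟨r, hr1, hr2⟩ := (hev.and (eventually_of_mem hmem fun r hr => hr)).exists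
      exact absurd (hlow r hr2) (not_le.mpr hr1)
    exact measure_mono_null hsub2 (measure_union_null hae (measure_singleton b))
  refine ⟨B', hBclosed, hB'sub, hbB, hnull, ?_⟩
  intro c d hac hcd hdb hdisj hdB
  have hclaim : ∀ t ∈ Ioo c d, ψ t ≤ ψ d := by
    intro t ht
    by_contra hcon
    push_neg at hcon
    set S := {s | s ∈ Icc t b ∧ ψ t ≤ ψ s} with hSdef
    have htS : t ∈ S := ⟨⟨le_refl t, by linarith [ht.2]⟩, le_refl _⟩
    have hSclosed : IsClosed S := by
      have hSeq : S = Icc t b ∩ ψ⁻¹' (Ici (ψ t)) := by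
        ext s; simp only [hSdef, mem_setOf_eq, mem_inter_iff, mem_preimage, mem_Ici]
      rw [hSeq]
      exact (hψcont.mono (Icc_subset_Icc (by linarith [ht.1]) (le_refl b)))
        |>.preimage_isClosed_of_isClosed isClosed_Icc isClosed_Ici
    have hScomp : IsCompact S := isCompact_Icc.of_isClosed_subset hSclosed fun s hs => hs.1
    set s₀ := sSup S with hs₀def
    have hs₀S : s₀ ∈ S := hScomp.sSup_mem ⟨t, htS⟩
    have hub : ∀ s ∈ S, s ≤ s₀ := fun s hs => le_csSup hScomp.bddAbove hs
    rcases lt_or_ge s₀ d with hlt | hge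
    · have hs₀Ioo : s₀ ∈ Ioo c d := ⟨lt_of_lt_of_le ht.1 hs₀S.1.1, hlt⟩
      have hs₀nB : s₀ ∉ B' := by
        intro hmem
        have : s₀ ∈ Ioo c d ∩ B' := ⟨hs₀Ioo, hmem⟩
        rw [hdisj] at this
        exact this
      have hs₀I : s₀ ∈ Icc a b := ⟨le_trans hac hs₀Ioo.1.le, hs₀S.1.2⟩
      have : ¬ ∀ s ∈ Icc s₀ b, ψ s ≤ ψ s₀ := fun h => hs₀nB ⟨hs₀I, h⟩
      push_neg at this
      obtain ⟨s', hs'I, hs'ψ⟩ := this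
      have hs'S : s' ∈ S := ⟨⟨hs₀S.1.1.trans hs'I.1, hs'I.2⟩, le_trans hs₀S.2 hs'ψ.le⟩
      have : s' ≤ s₀ := hub s' hs'S
      have : s' = s₀ := le_antisymm this hs'I.1
      rw [this] at hs'ψ
      exact lt_irrefl _ hs'ψ
    · have hψs₀ : ψ s₀ ≤ ψ d := hdB.2 s₀ ⟨hge, hs₀S.1.2⟩
      linarith [hs₀S.2]
  have hbound : ∀ t ∈ Ioc c d, volume (F' ∩ Ioc t d) ≤ ENNReal.ofReal (ε * (d - c)) := by
    rintro t ⟨htc, htd⟩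
    rcases eq_or_lt_of_le htd with rfl | htd'
    · simp
    · have hψt := hclaim t ⟨htc, htd'⟩
      have h1 : (volume (F' ∩ Ioc t d)).toReal ≤ ε * (d - c) := by
        rw [← hφdiff (hac.trans htc.le) htd]
        simp only [hψdef] at hψt
        nlinarith
      exact (ENNReal.le_ofReal_iff_toReal_le (hIocfin t d)
        (by nlinarith)).mpr h1
  have hmono : Monotone fun n : ℕ => F' ∩ Ioc (c + (d - c)/(n+1)) d := by
    intro m n hmn
    apply inter_subset_inter_right
    apply Ioc_subset_Ioc_left
    apply add_le_add_right
    apply div_le_div_of_nonneg_left (by linarith) (by positivity)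
    exact_mod_cast by exact_mod_cast add_le_add_left (Nat.cast_le.mpr hmn) 1
  have hsubU : F' ∩ Ioo c d ⊆ ⋃ n : ℕ, F' ∩ Ioc (c + (d - c)/(n+1)) d := by
    rintro x ⟨hxF, hx1, hx2⟩
    obtain ⟨n, hn⟩ := exists_nat_one_div_lt (show (0:ℝ) < (x - c)/(d - c) by
      apply div_pos <;> linarith)
    refine mem_iUnion.mpr ⟨n, hxF, ?_, hx2.le⟩
    have hdc : (0:ℝ) < d - c := by linarith
    have hne : d - c ≠ 0 := ne_of_gt hdc
    have h3 : (d - c) * ((x - c)/(d - c)) = x - c := by field_simp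
    have h2 : (d - c) / (↑n + 1) < x - c := by
      calc (d - c)/(↑n + 1) = (d - c) * (1/(↑n + 1)) := by ring
        _ < (d - c) * ((x - c)/(d - c)) := mul_lt_mul_of_pos_left hn hdc
        _ = x - c := h3
    linarith
  calc volume (F' ∩ Ioo c d) ≤ volume (⋃ n : ℕ, F' ∩ Ioc (c + (d - c)/(n+1)) d) :=
        measure_mono hsubU
    _ = ⨆ n : ℕ, volume (F' ∩ Ioc (c + (d - c)/(n+1)) d) :=
        (hmono.directed_le).measure_iUnion
    _ ≤ ENNReal.ofReal (ε * (d - c)) := by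
        apply iSup_le
        intro n
        apply hbound
        constructor
        · have : (0:ℝ) < (d - c)/(n+1) := div_pos (by linarith) (by positivity)
          linarith
        · have h4 : (d - c)/(n+1) ≤ d - c := by
            apply div_le_self (by linarith)
            have := Nat.cast_nonneg (α := ℝ) n
            linarith
          linarith

private lemma open_comp_interval {S : Set ℝ} (hS : IsOpen S) {t : ℝ} (ht : t ∈ S)
    {a b : ℝ} (hsub : S ⊆ Ioo a b) :
    ∃ c d : ℝ, a ≤ c ∧ c < d ∧ d ≤ b ∧ connectedComponentIn S t = Ioo c d := by
  set ℓ := connectedComponentIn S t with hℓ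
  have hℓsub : ℓ ⊆ S := connectedComponentIn_subset S t
  have htℓ : t ∈ ℓ := mem_connectedComponentIn ht
  have hℓopen : IsOpen ℓ := hS.connectedComponentIn
  have hℓne : ℓ.Nonempty := ⟨t, htℓ⟩
  have hbdd : BddAbove ℓ := ⟨b, fun y hy => (hsub (hℓsub hy)).2.le⟩
  have hbddb : BddBelow ℓ := ⟨a, fun y hy => (hsub (hℓsub hy)).1.le⟩
  set c := sInf ℓ with hc
  set d := sSup ℓ with hd
  have hcd1 : ∀ y ∈ ℓ, c ≤ y := fun y hy => csInf_le hbddb hy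
  have hcd2 : ∀ y ∈ ℓ, y ≤ d := fun y hy => le_csSup hbdd hy
  have hcnot : c ∉ ℓ := by
    intro hcℓ
    obtain ⟨δ, hδ, hball⟩ := Metric.isOpen_iff.mp hℓopen c hcℓ
    have : c - δ/2 ∈ ℓ := hball (by rw [Real.ball_eq_Ioo]; constructor <;> [linarith; linarith])
    linarith [hcd1 _ this]
  have hdnot : d ∉ ℓ := by
    intro hdℓ
    obtain ⟨δ, hδ, hball⟩ := Metric.isOpen_iff.mp hℓopen d hdℓ
    have : d + δ/2 ∈ ℓ := hball (by rw [Real.ball_eq_Ioo]; constructor <;> [linarith; linarith])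
    linarith [hcd2 _ this]
  have hord : OrdConnected ℓ := isPreconnected_connectedComponentIn.ordConnected
  have hℓeq : ℓ = Ioo c d := by
    apply Subset.antisymm
    · intro y hy
      refine ⟨lt_of_le_of_ne (hcd1 y hy) ?_, lt_of_le_of_ne (hcd2 y hy) ?_⟩
      · intro h; exact hcnot (h ▸ hy)
      · intro h; exact hdnot (h ▸ hy)
    · intro y hy
      obtain ⟨u, huℓ, hu⟩ := exists_lt_of_csInf_lt hℓne hy.1
      obtain ⟨v, hvℓ, hv⟩ := exists_lt_of_lt_csSup hℓne hy.2
      exact hord.out huℓ hvℓ ⟨hu.le, hv.le⟩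
  have hctd : c < t := by
    have := hℓeq ▸ htℓ; exact this.1
  have htd : t < d := (hℓeq ▸ htℓ).2
  refine ⟨c, d, ?_, lt_trans hctd htd, ?_, hℓeq⟩
  · -- a ≤ c
    apply le_csInf hℓne
    intro y hy
    exact (hsub (hℓsub hy)).1.le
  · apply csSup_le hℓne
    intro y hy
    exact (hsub (hℓsub hy)).2.le

private lemma open_diff_comp {S : Set ℝ} (hS : IsOpen S) (t : ℝ) :
    IsOpen (S \ connectedComponentIn S t) := by
  rw [isOpen_iff_mem_nhds]
  rintro y ⟨hyS, hyn⟩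
  have hopen : IsOpen (connectedComponentIn S y) := hS.connectedComponentIn
  rw [mem_nhds_iff]
  refine ⟨connectedComponentIn S y, ?_, hopen, mem_connectedComponentIn hyS⟩
  intro z hz
  refine ⟨connectedComponentIn_subset S y hz, fun hzℓ => hyn ?_⟩
  have h1 := connectedComponentIn_eq hz
  have h2 := connectedComponentIn_eq hzℓ
  rw [h2, ← h1]
  exact mem_connectedComponentIn hyS

/-- Let `F` be a measurable subset of an arc `I` and `ε > 0`. Then
there is a closed subset `B` of `I`, almost contained in `F`, such that every connected
component `ℓ` of `I \ B` satisfies `|ℓ ∩ F| ≤ ε |ℓ|`. -/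
theorem exists_closed_almost_contained
    (I F : Set ℂ) (hI : IsClosedArc I) (hF : MeasurableSet F) (hFI : F ⊆ I)
    (ε : ℝ) (hε : 0 < ε) :
    ∃ B : Set ℂ, IsClosed B ∧ B ⊆ I ∧ mC (B \ F) = 0 ∧
      ∀ x ∈ I \ B,
        mC (connectedComponentIn (I \ B) x ∩ F) ≤
          ENNReal.ofReal ε * mC (connectedComponentIn (I \ B) x) := by
  obtain ⟨a, b, hab, hba, hIeq⟩ := hI
  have hπ := Real.pi_pos
  have hcmc : Continuous (circleMap 0 1) := continuous_circleMap 0 1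
  have hsphere : I ⊆ unitCircleSet := by
    rw [hIeq]
    rintro z ⟨s, _, rfl⟩
    exact circleMap_mem_sphere 0 zero_le_one s
  set F' : Set ℝ := circleMap 0 1 ⁻¹' F ∩ Icc a b with hF'def
  have hF'm : MeasurableSet F' := (hcmc.measurable hF).inter measurableSet_Icc
  obtain ⟨B', hBc, hBsub, hbB, hBnull, hBkey⟩ := real_decomp a b hab F' hF'm hε
  set B'' : Set ℝ := insert a B' with hB''def
  have hB''sub : B'' ⊆ Icc a b := insert_subset ⟨le_refl a, hab.le⟩ hBsub
  have hB''closed : IsClosed B'' := by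
    rw [hB''def, insert_eq]
    exact isClosed_singleton.union hBc
  set B : Set ℂ := circleMap 0 1 '' B'' with hBdef
  have hBclosed : IsClosed B :=
    ((isCompact_Icc.of_isClosed_subset hB''closed hB''sub).image hcmc).isClosed
  have hBI : B ⊆ I := by rw [hIeq, hBdef]; exact image_mono hB''sub
  -- the key injectivity-in-window fact
  have hwin : ∀ s u : ℝ, s ∈ Ioc a (a + 2*π) → u ∈ Icc a b → circleMap 0 1 s = circleMap 0 1 u →
      s = u ∨ (s = a + 2*π ∧ u = a) := by
    intro s u hs hu h
    obtain ⟨n, hn⟩ := cm_eq_iff.mp h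
    have hb1 : -(2*π) < (n:ℝ) * (2*π) := by nlinarith [hs.1, hs.2, hu.1, hu.2, hba]
    have hb2 : (n:ℝ) * (2*π) ≤ 2*π := by nlinarith [hs.1, hs.2, hu.1, hu.2, hba]
    have hn1 : (-1:ℝ) < (n:ℝ) := by nlinarith
    have hn2 : (n:ℝ) ≤ 1 := by nlinarith
    have hn1' : (-1:ℤ) < n := by exact_mod_cast hn1
    have hn2' : n ≤ 1 := by exact_mod_cast hn2
    interval_cases n
    · left; rw [hn]; push_cast; ring
    · right
      have hs' : s = u + 2*π := by rw [hn]; push_cast; ring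
      constructor
      · -- s = a + 2π : from s ≤ a+2π and s = u + 2π ≥ a + 2π
        have := hu.1
        have := hs.2
        linarith
      · have := hu.1; have := hs.2; linarith
  -- injectivity inside (a,b] vs [a,b]
  have hinj : ∀ s u : ℝ, s ∈ Ioo a b → u ∈ Icc a b → circleMap 0 1 s = circleMap 0 1 u → s = u := by
    intro s u hs hu h
    apply cm_inj h
    rw [abs_sub_lt_iff]
    constructor
    · linarith [hs.2, hu.1, hba]
    · linarith [hs.1, hu.2, hba]
  -- B \ F is null
  have hBFnull : mC (B \ F) = 0 := by
    have hmeas : MeasurableSet (B \ F) := hBclosed.measurableSet.diff hF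
    rw [mC_apply hmeas a]
    have hsub : circleMap 0 1 ⁻¹' (B \ F) ∩ Ioc a (a + 2*π) ⊆
        (B' \ F') ∪ ({a} ∪ {b} ∪ {a + 2*π}) := by
      rintro s ⟨hsBF, hsIoc⟩
      obtain ⟨hsB, hsF⟩ := hsBF
      obtain ⟨u, huB'', hue⟩ := hsB
      rcases hwin s u hsIoc (hB''sub huB'') hue.symm with rfl | ⟨h1, h2⟩
      · rcases huB'' with rfl | huB'
        · exact Or.inr (Or.inl (Or.inl rfl))
        · rcases eq_or_ne s b with rfl | hsb
          · exact Or.inr (Or.inl (Or.inr rfl))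
          · left
            refine ⟨huB', fun hsF' => hsF hsF'.1⟩
      · exact Or.inr (Or.inr h1)
    have h0 : volume ((B' \ F') ∪ ({a} ∪ {b} ∪ ({a + 2*π} : Set ℝ))) = 0 := by
      refine measure_union_null hBnull ?_
      refine measure_union_null (measure_union_null ?_ ?_) ?_ <;> exact measure_singleton _
    rw [measure_mono_null hsub h0, mul_zero]
  refine ⟨B, hBclosed, hBI, hBFnull, ?_⟩
  -- now components
  set S : Set ℝ := Ioo a b \ B' with hSdef
  have hSopen : IsOpen S := isOpen_Ioo.sdiff hBc
  have hSsub : S ⊆ Ioo a b := fun s hs => hs.1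
  have hIB : I \ B = circleMap 0 1 '' S := by
    apply Subset.antisymm
    · rintro z ⟨hzI, hzB⟩
      rw [hIeq] at hzI
      obtain ⟨u, huIcc, rfl⟩ := hzI
      have huB'' : u ∉ B'' := fun h => hzB ⟨u, h, rfl⟩
      have hua : u ≠ a := fun h => huB'' (h ▸ mem_insert a B')
      have hub : u ≠ b := by
        intro h
        exact huB'' (mem_insert_of_mem a (h ▸ hbB))
      have huB' : u ∉ B' := fun h => huB'' (mem_insert_of_mem a h)
      exact ⟨u, ⟨⟨lt_of_le_of_ne huIcc.1 (Ne.symm hua), lt_of_le_of_ne huIcc.2 hub⟩, huB'⟩, rfl⟩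
    · rintro z ⟨s, hsS, rfl⟩
      constructor
      · rw [hIeq]
        exact ⟨s, Ioo_subset_Icc_self hsS.1, rfl⟩
      · rintro ⟨u, huB'', hue⟩
        have := hinj s u hsS.1 (hB''sub huB'') hue.symm
        rw [← this] at huB''
        rcases huB'' with h | h
        · exact ne_of_gt hsS.1.1 h
        · exact hsS.2 h
  intro x hx
  obtain ⟨t, htS, rfl⟩ := hIB ▸ hx
  obtain ⟨c, d, hac, hcd, hdb, hcomp⟩ := open_comp_interval hSopen htS hSsub
  have hIoosubS : Ioo c d ⊆ S := hcomp ▸ connectedComponentIn_subset S t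
  have hdisjcd : Ioo c d ∩ B' = ∅ := by
    ext y
    simp only [mem_inter_iff, mem_empty_iff_false, iff_false, not_and]
    intro hy
    exact fun hyB => (hIoosubS hy).2 hyB
  have hdB' : d ∈ B' := by
    have hdnS : d ∉ S := by
      intro hdS
      obtain ⟨δ, hδ, hball⟩ := Metric.isOpen_iff.mp hSopen d hdS
      have hsub' : Ioo c (d + δ) ⊆ S := by
        intro y hy
        rcases lt_or_ge y d with h | h
        · exact hIoosubS ⟨hy.1, h⟩
        · exact hball (by rw [Real.ball_eq_Ioo]; exact ⟨by linarith, hy.2⟩)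
      have htmem : t ∈ Ioo c (d + δ) := by
        have := hcomp ▸ mem_connectedComponentIn htS
        exact ⟨this.1, by linarith [this.2]⟩
      have := isPreconnected_Ioo.subset_connectedComponentIn htmem hsub'
      rw [hcomp] at this
      have hdmem : d ∈ Ioo c (d + δ) := ⟨hcd, by linarith⟩
      exact lt_irrefl d (this hdmem).2
    rcases eq_or_lt_of_le hdb with rfl | hdlt
    · exact hbB
    · by_contra hdB
      exact hdnS ⟨⟨by linarith, hdlt⟩, hdB⟩
  have hreal : volume (F' ∩ Ioo c d) ≤ ENNReal.ofReal (ε * (d - c)) :=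
    hBkey c d hac hcd hdb hdisjcd hdB'
  set U : Set ℂ := circleMap 0 1 '' Ioo c d with hUdef
  set J : Set ℂ := connectedComponentIn (I \ B) (circleMap 0 1 t) with hJdef
  have hxJ : circleMap 0 1 t ∈ J := mem_connectedComponentIn hx
  have hxU : circleMap 0 1 t ∈ U := by
    refine ⟨t, ?_, rfl⟩
    exact hcomp ▸ mem_connectedComponentIn htS
  have hUsub : U ⊆ I \ B := by
    rw [hIB]
    exact image_mono hIoosubS
  have hJU : J = U := by
    obtain ⟨O₁, hO₁o, hO₁⟩ := exists_open_image (isOpen_Ioo (a := c) (b := d))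
    obtain ⟨O₂, hO₂o, hO₂⟩ := exists_open_image (open_diff_comp hSopen t)
    rw [hcomp] at hO₂
    have hUV : ∀ z, z ∈ U → z ∈ circleMap 0 1 '' (S \ Ioo c d) → False := by
      rintro z ⟨s, hs, rfl⟩ ⟨u, hu, hue⟩
      have hsab : s ∈ Ioo a b := ⟨lt_of_le_of_lt hac hs.1, lt_of_lt_of_le hs.2 hdb⟩
      have := hinj s u hsab (Ioo_subset_Icc_self (hSsub hu.1)) hue.symm
      exact hu.2 (this ▸ hs)
    apply Subset.antisymm
    · -- J ⊆ U
      intro z hzJ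
      by_contra hzU
      have hJsub : J ⊆ U ∪ circleMap 0 1 '' (S \ Ioo c d) := by
        have h1 : J ⊆ I \ B := connectedComponentIn_subset _ _
        rw [hIB] at h1
        intro w hw
        obtain ⟨s, hsS', rfl⟩ := h1 hw
        by_cases hscd : s ∈ Ioo c d
        · exact Or.inl ⟨s, hscd, rfl⟩
        · exact Or.inr ⟨s, ⟨hsS', hscd⟩, rfl⟩
      have hzV : z ∈ circleMap 0 1 '' (S \ Ioo c d) := (hJsub hzJ).resolve_left hzU
      have hJpre : IsPreconnected J := isPreconnected_connectedComponentIn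
      have hJsph : J ⊆ unitCircleSet := fun w hw =>
        hsphere ((connectedComponentIn_subset _ _ hw).1)
      obtain ⟨w, hwJ, hwO₁, hwO₂⟩ := hJpre O₁ O₂ hO₁o hO₂o
        (fun w hw => by
          rcases hJsub hw with h | h
          · exact Or.inl (by rw [hUdef, ← hO₁] at h; exact h.2)
          · exact Or.inr (by rw [← hO₂] at h; exact h.2))
        ⟨circleMap 0 1 t, hxJ, by rw [hUdef, ← hO₁] at hxU; exact hxU.2⟩
        ⟨z, hzJ, by rw [← hO₂] at hzV; exact hzV.2⟩
      have hwU : w ∈ U := by rw [hUdef, ← hO₁]; exact ⟨hJsph hwJ, hwO₁⟩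
      have hwV : w ∈ circleMap 0 1 '' (S \ Ioo c d) := by
        rw [← hO₂]; exact ⟨hJsph hwJ, hwO₂⟩
      exact hUV w hwU hwV
    · exact (isPreconnected_Ioo.image _ hcmc.continuousOn).subset_connectedComponentIn hxU hUsub
  have hUmeas : MeasurableSet U := by
    obtain ⟨O₁, hO₁o, hO₁⟩ := exists_open_image (isOpen_Ioo (a := c) (b := d))
    rw [hUdef, ← hO₁]
    exact (Metric.isClosed_sphere.measurableSet).inter hO₁o.measurableSet
  have hpreU : circleMap 0 1 ⁻¹' U ∩ Ioc a (a + 2*π) = Ioo c d := by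
    apply Subset.antisymm
    · rintro s ⟨hsU, hsIoc⟩
      obtain ⟨u, hu, hue⟩ := hsU
      have huIcc : u ∈ Icc a b := Ioo_subset_Icc_self (hSsub (hIoosubS hu))
      rcases hwin s u hsIoc huIcc hue.symm with rfl | ⟨h1, h2⟩
      · exact hu
      · exfalso
        have : a < u := lt_of_le_of_lt hac hu.1
        linarith [h2 ▸ this]
    · intro s hs
      refine ⟨⟨s, hs, rfl⟩, ?_, ?_⟩
      · exact lt_of_le_of_lt hac hs.1
      · linarith [hs.2, hdb, hba]
  have hmCU : mC U = (ENNReal.ofReal (2*π))⁻¹ * ENNReal.ofReal (d - c) := by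
    rw [mC_apply hUmeas a, hpreU, Real.volume_Ioo]
  have hmCUF : mC (U ∩ F) = (ENNReal.ofReal (2*π))⁻¹ * volume (F' ∩ Ioo c d) := by
    rw [mC_apply (hUmeas.inter hF) a]
    congr 1
    rw [preimage_inter]
    have : circleMap 0 1 ⁻¹' U ∩ circleMap 0 1 ⁻¹' F ∩ Ioc a (a + 2*π) =
        (circleMap 0 1 ⁻¹' U ∩ Ioc a (a + 2*π)) ∩ circleMap 0 1 ⁻¹' F := by
      ext y; simp only [mem_inter_iff]; tauto
    rw [this, hpreU]
    congr 1
    ext y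
    simp only [hF'def, mem_inter_iff, mem_Ioo, mem_Icc, mem_preimage]
    constructor
    · rintro ⟨hy1, hy2⟩
      exact ⟨⟨hy2, le_trans hac hy1.1.le, le_trans hy1.2.le hdb⟩, hy1⟩
    · rintro ⟨⟨hy1, _⟩, hy2⟩
      exact ⟨hy2, hy1⟩
  rw [hJU, hmCUF, hmCU]
  calc (ENNReal.ofReal (2*π))⁻¹ * volume (F' ∩ Ioo c d)
      ≤ (ENNReal.ofReal (2*π))⁻¹ * ENNReal.ofReal (ε * (d - c)) := by
        exact mul_le_mul_right hreal _
    _ = ENNReal.ofReal ε * ((ENNReal.ofReal (2*π))⁻¹ * ENNReal.ofReal (d - c)) := by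
        rw [ENNReal.ofReal_mul hε.le]
        ring
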